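/- For every n ≥ 2, the identity (x₁²x₂²⋯xₙ²)² = (x₁²x₂²⋯xₙ²)³ holds in the 6-element semigroup AC₂. -/

import Mathlib

/-- The 6-element set `{a, b, ab, ba, 0, c}` underlying the semigroup `AC₂`
(`z` denotes the element `0` of `A₂`). -/
inductive AC2 : Type
  | a | b | ab | ba | z | c
  deriving DecidableEq

instance : Fintype AC2 :=
  ⟨⟨(([.a, .b, .ab, .ba, .z, .c] : List AC2) : Multiset AC2), by decide⟩,
    fun x => by cases x <;> decide⟩

/-- The multiplication on `AC₂`, extending that of
`A₂ = ⟨a,b ∣ a² = aba = a, bab = b, b² = 0⟩` by `c² = 0`, `xc = cx = c` for `x ∈ A₂`. -/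
def AC2.mul : AC2 → AC2 → AC2
  | .c, .c => .z
  | .c, _ => .c
  | _, .c => .c
  | .z, _ => .z
  | _, .z => .z
  | .a, .a => .a
  | .a, .b => .ab
  | .a, .ab => .ab
  | .a, .ba => .a
  | .b, .a => .ba
  | .b, .b => .z
  | .b, .ab => .b
  | .b, .ba => .z
  | .ab, .a => .a
  | .ab, .b => .z
  | .ab, .ab => .ab
  | .ab, .ba => .z
  | .ba, .a => .ba
  | .ba, .b => .b
  | .ba, .ab => .b
  | .ba, .ba => .ba

instance : Mul AC2 := ⟨AC2.mul⟩

instance : Semigroup AC2 where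
  mul_assoc := by decide

/-- The product `x₁² x₂² ⋯ xₙ²` of the squares of `n = m + 2 ≥ 2` elements. -/
def sqProd {S : Type*} [Mul S] {m : ℕ} (f : Fin (m + 2) → S) : S :=
  List.foldl (· * ·) (f 0 * f 0) (List.ofFn fun i : Fin (m + 1) => f i.succ * f i.succ)

/-- For every `n ≥ 2`, the identity `(x₁²x₂²⋯xₙ²)² = (x₁²x₂²⋯xₙ²)³` holds
in the 6-element semigroup `AC₂`. -/
lemma AC2.mul_ne_c : ∀ x y : AC2, x ≠ .c → y ≠ .c → x * y ≠ .c := by decide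

lemma AC2.foldl_ne_c : ∀ (l : List AC2), (∀ y ∈ l, y ≠ .c) → ∀ x : AC2, x ≠ .c →
    List.foldl (· * ·) x l ≠ .c := by
  intro l
  induction l with
  | nil => intro _ x hx; exact hx
  | cons y t ih =>
    intro h x hx
    exact ih (fun w hw => h w (List.mem_cons_of_mem y hw)) _
      (AC2.mul_ne_c x y hx (h y List.mem_cons_self))

theorem AC2_sqProd (m : ℕ) (f : Fin (m + 2) → AC2) :
    sqProd f * sqProd f = sqProd f * sqProd f * sqProd f := by
  have hsq : ∀ x : AC2, x * x ≠ .c := by decide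
  have hne : sqProd f ≠ .c := by
    apply AC2.foldl_ne_c
    · intro y hy
      rcases List.mem_ofFn.mp hy with ⟨i, rfl⟩
      exact hsq _
    · exact hsq _
  have key : ∀ x : AC2, x ≠ .c → x * x = x * x * x := by decide
  exact key _ hne
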